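/- Let λ be a strong limit cardinal with cf(λ) = ω, and let B(λ) = D(λ)^ω be the Baire space of weight λ, i.e., the countable product of the discrete space of cardinality λ. If C ⊆ B(λ) has cardinality λ⁺, then there is D ⊆ C with |D| = λ such that the closure of D in B(λ) has cardinality λ^ω (cardinal exponentiation). -/

import Mathlib

open Cardinal

namespace Stmt16

variable {Lam : Type}

/-- first `n` values of `x` as a list -/
def trc (x : ℕ → Lam) (n : ℕ) : List Lam := List.ofFn (fun i : Fin n => x i)

@[simp] lemma trc_length (x : ℕ → Lam) (n : ℕ) : (trc x n).length = n := by
  simp [trc]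

lemma trc_getElem (x : ℕ → Lam) (n i : ℕ) (h : i < (trc x n).length) :
    (trc x n)[i] = x i := by
  simp [trc]

lemma trc_take (x : ℕ → Lam) {n m : ℕ} (h : n ≤ m) :
    (trc x m).take n = trc x n := by
  rw [trc, trc, ← Fin.ofFn_take_eq_take_ofFn h]
  congr 1

lemma trc_prefix (x : ℕ → Lam) {n m : ℕ} (h : n ≤ m) :
    trc x n <+: trc x m := by
  rw [← trc_take x h]; exact List.take_prefix _ _

lemma prefix_comparable {l₁ l₂ l₃ : List Lam} (h1 : l₁ <+: l₃) (h2 : l₂ <+: l₃) :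
    l₁ <+: l₂ ∨ l₂ <+: l₁ := by
  have e1 := h1.length_le
  have e2 := h2.length_le
  rcases le_total l₁.length l₂.length with h | h
  · left
    rw [List.prefix_iff_eq_take] at h1 h2
    rw [h1, h2]
    rw [List.prefix_iff_eq_take, List.take_take]
    rw [List.length_take]
    congr 1
    omega
  · right
    rw [List.prefix_iff_eq_take] at h1 h2
    rw [h1, h2]
    rw [List.prefix_iff_eq_take, List.take_take]
    rw [List.length_take]
    congr 1
    omega

/-- the set of elements of `C` extending the finite sequence `s` -/
def Csets (C : Set (ℕ → Lam)) (s : List Lam) : Set (ℕ → Lam) :=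
  {x ∈ C | trc x s.length = s}

lemma Csets_subset (C : Set (ℕ → Lam)) (s : List Lam) : Csets C s ⊆ C :=
  fun _ hx => hx.1

@[simp] lemma Csets_nil (C : Set (ℕ → Lam)) : Csets C ([] : List Lam) = C := by
  ext x; simp [Csets, trc]

lemma Csets_anti {C : Set (ℕ → Lam)} {s t : List Lam} (h : s <+: t) :
    Csets C t ⊆ Csets C s := by
  rintro x ⟨hxC, hxt⟩
  refine ⟨hxC, ?_⟩
  have hl : s.length ≤ t.length := h.length_le
  rw [List.prefix_iff_eq_take] at h
  conv_rhs => rw [h, ← hxt]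
  rw [trc_take x hl]

lemma comparable_of_mem {C : Set (ℕ → Lam)} {s t : List Lam} {x : ℕ → Lam}
    (hs : x ∈ Csets C s) (ht : x ∈ Csets C t) : s <+: t ∨ t <+: s := by
  have h1 : s <+: trc x (max s.length t.length) := by
    conv_lhs => rw [← hs.2]
    exact trc_prefix x (le_max_left _ _)
  have h2 : t <+: trc x (max s.length t.length) := by
    conv_lhs => rw [← ht.2]
    exact trc_prefix x (le_max_right _ _)
  exact prefix_comparable h1 h2

/-- `s` has `lam⁺`-many extensions in `C` -/
def Big (lam : Cardinal.{0}) (C : Set (ℕ → Lam)) (s : List Lam) : Prop :=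
  Order.succ lam ≤ #(Csets C s)



lemma notBig_le {lam : Cardinal.{0}} {C : Set (ℕ → Lam)} {t : List Lam}
    (h : ¬ Big lam C t) : #(Csets C t) ≤ lam := by
  rw [Big, not_le, Order.lt_succ_iff] at h; exact h

theorem split (lam : Cardinal.{0}) (hsl : lam.IsStrongLimit) (hLam : #Lam = lam)
    (C : Set (ℕ → Lam)) (s : List Lam) (hs : Big lam C s)
    {κ : Cardinal.{0}} (hκ : κ < lam) :
    ∃ f : κ.out → List Lam,
      (∀ a, s <+: f a ∧ s.length < (f a).length ∧ Big lam C (f a)) ∧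
      (∀ a b, a ≠ b → ¬ (f a <+: f b)) := by
  classical
  have hlaminf : ℵ₀ ≤ lam := hsl.aleph0_le
  haveI : Infinite Lam := Cardinal.infinite_iff.mpr (by rw [hLam]; exact hlaminf)
  by_contra hcon
  push_neg at hcon
  -- helper: no injective same-length family of big proper extensions
  have nofam : ∀ (N : ℕ) (g : κ.out → List Lam), s.length < N →
      (∀ a, s <+: g a ∧ (g a).length = N ∧ Big lam C (g a)) →
      ¬ Function.Injective g := by
    intro N g hN hg hinj
    obtain ⟨a, b, hab, hpre⟩ := hcon g (fun a =>
      ⟨(hg a).1, by rw [(hg a).2.1]; exact hN, (hg a).2.2⟩)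
    exact hab (hinj (hpre.eq_of_length ((hg a).2.1.trans (hg b).2.1.symm)))
  -- the set of "branches"
  set Br : Set (ℕ → Lam) := {x | x ∈ Csets C s ∧ ∀ n, Big lam C (trc x n)} with hBrdef
  -- Step A : the rest is small
  have hrest : #(Csets C s \ Br : Set (ℕ → Lam)) ≤ lam := by
    have hsub : Csets C s \ Br ⊆
        ⋃ (t : {t : List Lam // ¬ Big lam C t}), Csets C t.1 := by
      rintro x ⟨hx, hxn⟩
      have : ¬ (x ∈ Csets C s ∧ ∀ n, Big lam C (trc x n)) := hxn
      push_neg at this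
      obtain ⟨n, hn⟩ := this hx
      refine Set.mem_iUnion.2 ⟨⟨trc x n, hn⟩, hx.1, ?_⟩
      rw [trc_length]
    calc #(Csets C s \ Br : Set (ℕ → Lam))
        ≤ #(⋃ (t : {t : List Lam // ¬ Big lam C t}), Csets C t.1) :=
          mk_le_mk_of_subset hsub
      _ ≤ sum (fun t : {t : List Lam // ¬ Big lam C t} => #(Csets C t.1)) :=
          mk_iUnion_le_sum_mk
      _ ≤ sum (fun _ : {t : List Lam // ¬ Big lam C t} => lam) :=
          sum_le_sum _ _ (fun t => notBig_le t.2)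
      _ = #{t : List Lam // ¬ Big lam C t} * lam := sum_const' _ _
      _ ≤ #(List Lam) * lam := by
          exact mul_le_mul_left (mk_set_le _) lam
      _ = lam * lam := by rw [mk_list_eq_mk, hLam]
      _ = lam := mul_eq_self hlaminf
  -- Step B : many branches
  have hBr : lam < #Br := by
    by_contra hle
    push_neg at hle
    have hcup : Csets C s = Br ∪ (Csets C s \ Br) :=
      (Set.union_diff_cancel (fun x hx => hx.1)).symm
    have : #(Csets C s) ≤ lam := by
      rw [hcup]
      calc #(Br ∪ (Csets C s \ Br) : Set (ℕ → Lam)) ≤ #Br + #(Csets C s \ Br : Set (ℕ → Lam)) :=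
        mk_union_le _ _
      _ ≤ lam + lam := add_le_add hle hrest
      _ = lam := add_eq_self hlaminf
    exact absurd (hs.trans this) (by simp [Order.succ_le_iff])
  have hκBr : κ ≤ #Br := (hκ.trans hBr).le
  rcases lt_or_ge κ ℵ₀ with hκfin | hκinf
  · -- finite case
    haveI : Finite κ.out := by
      rw [← Cardinal.lt_aleph0_iff_finite, mk_out]; exact hκfin
    haveI : Fintype κ.out := Fintype.ofFinite _
    obtain ⟨e⟩ : Nonempty (κ.out ↪ Br) := by
      rw [← Cardinal.le_def, mk_out]; exact hκBr
    set x : κ.out → (ℕ → Lam) := fun a => (e a).1 with hxdef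
    have hxBr : ∀ a, x a ∈ Br := fun a => (e a).2
    have hdiff : ∀ a b : κ.out, a ≠ b → ∃ n, x a n ≠ x b n := by
      intro a b hab
      by_contra hno
      push_neg at hno
      exact hab (e.injective (Subtype.ext (funext hno)))
    set F : κ.out × κ.out → ℕ := fun p =>
      if h : p.1 ≠ p.2 then Nat.find (hdiff p.1 p.2 h) + 1 else 0 with hFdef
    set N : ℕ := s.length + 1 + Finset.univ.sup F with hNdef
    have hsep : ∀ a b : κ.out, a ≠ b → trc (x a) N ≠ trc (x b) N := by
      intro a b hab heq
      have hfind := Nat.find_spec (hdiff a b hab)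
      set n := Nat.find (hdiff a b hab)
      have hnN : n < N := by
        have hle : F (a, b) ≤ Finset.univ.sup F := Finset.le_sup (Finset.mem_univ (a, b))
        have heqF : F (a, b) = Nat.find (hdiff a b hab) + 1 := dif_pos hab
        omega
      have h1 := List.getElem_of_eq heq (show n < (trc (x a) N).length by
        rw [trc_length]; exact hnN)
      rw [trc_getElem, trc_getElem] at h1
      exact hfind h1
    refine nofam N (fun a => trc (x a) N) (by omega) (fun a => ⟨?_, trc_length _ _, ?_⟩) ?_
    · conv_lhs => rw [← (hxBr a).1.2]
      exact trc_prefix _ (by omega)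
    · exact (hxBr a).2 N
    · intro a b hab
      by_contra hne
      exact hsep a b hne hab
  · -- infinite case
    -- levels
    have hlevel : ∀ n : ℕ, #({t : List Lam | (s <+: t ∧ Big lam C t) ∧ t.length = n}) ≤ κ := by
      intro n
      rcases le_or_gt n s.length with hn | hn
      · refine le_trans (mk_le_one_iff_set_subsingleton.2 ?_) (one_lt_aleph0.le.trans hκinf)
        rintro t ⟨⟨hpre, _⟩, hlen⟩ u ⟨⟨hpre', _⟩, hlen'⟩
        have h1 := hpre.length_le
        have h2 := hpre'.length_le
        have ht : s = t := hpre.eq_of_length (by omega)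
        have hu : s = u := hpre'.eq_of_length (by omega)
        rw [← ht, ← hu]
      · by_contra hgt
        push_neg at hgt
        obtain ⟨e⟩ : Nonempty (κ.out ↪ ({t : List Lam | (s <+: t ∧ Big lam C t) ∧ t.length = n})) := by
          rw [← Cardinal.le_def, mk_out]; exact hgt.le
        exact nofam n (fun a => (e a).1) hn
          (fun a => ⟨(e a).2.1.1, (e a).2.2, (e a).2.1.2⟩)
          (fun a b hab => e.injective (Subtype.ext hab))
    have hWU : {t : List Lam | s <+: t ∧ Big lam C t} =
        ⋃ n : ℕ, {t : List Lam | (s <+: t ∧ Big lam C t) ∧ t.length = n} := by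
      ext t
      simp only [Set.mem_iUnion, Set.mem_setOf_eq]
      exact ⟨fun h => ⟨t.length, h, rfl⟩, fun ⟨n, h, _⟩ => h⟩
    have hW : #({t : List Lam | s <+: t ∧ Big lam C t}) ≤ κ := by
      calc #({t : List Lam | s <+: t ∧ Big lam C t})
          = #(⋃ n : ℕ, {t : List Lam | (s <+: t ∧ Big lam C t) ∧ t.length = n}) := by rw [hWU]
        _ ≤ sum (fun n : ℕ => #({t : List Lam | (s <+: t ∧ Big lam C t) ∧ t.length = n})) :=
            mk_iUnion_le_sum_mk
        _ ≤ sum (fun _ : ℕ => κ) := sum_le_sum _ _ hlevel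
        _ = #ℕ * κ := sum_const' _ _
        _ = κ := by rw [mk_nat, aleph0_mul_eq hκinf]
    -- branches inject into W ^ ℕ
    have hBrW : #Br ≤ #({t : List Lam | s <+: t ∧ Big lam C t}) ^ ℵ₀ := by
      have hinj : Function.Injective (fun x : Br =>
          (fun n : ℕ => (⟨trc x.1 (s.length + n), by
            constructor
            · conv_lhs => rw [← x.2.1.2]
              exact trc_prefix _ (by omega)
            · exact x.2.2 _⟩ :
            {t : List Lam // s <+: t ∧ Big lam C t}))) := by
        intro x y h
        apply Subtype.ext
        funext i
        have h2 := congrFun h (i + 1)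
        have h3 : trc x.1 (s.length + (i+1)) = trc y.1 (s.length + (i+1)) :=
          congrArg Subtype.val h2
        have h4 := List.getElem_of_eq h3 (show i < (trc x.1 (s.length + (i+1))).length by
          rw [trc_length]; omega)
        rwa [trc_getElem, trc_getElem] at h4
      calc #Br ≤ #(ℕ → {t : List Lam // s <+: t ∧ Big lam C t}) := mk_le_of_injective hinj
        _ = #({t : List Lam | s <+: t ∧ Big lam C t}) ^ ℵ₀ := by
            rw [← power_def, mk_nat]
            rfl
    have : lam < lam := by
      calc lam < #Br := hBr
        _ ≤ #({t : List Lam | s <+: t ∧ Big lam C t}) ^ ℵ₀ := hBrW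
        _ ≤ κ ^ ℵ₀ := power_le_power_right hW
        _ ≤ (2 ^ κ) ^ ℵ₀ := power_le_power_right (cantor κ).le
        _ = 2 ^ (κ * ℵ₀) := (power_mul).symm
        _ = 2 ^ κ := by rw [mul_aleph0_eq hκinf]
        _ < lam := hsl.two_power_lt hκ
    exact absurd this (lt_irrefl _)

section Construction

abbrev K (κ : ℕ → Cardinal.{0}) (n : ℕ) : Type := (κ n).out
abbrev Tup (κ : ℕ → Cardinal.{0}) (n : ℕ) : Type := ∀ i : Fin n, K κ i.val



def GoodFam (lam : Cardinal.{0}) (C : Set (ℕ → Lam)) (κ : ℕ → Cardinal.{0}) (n : ℕ)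
    (S : Tup κ n → List Lam) : Prop :=
  (∀ t, Big lam C (S t) ∧ n ≤ (S t).length) ∧ ∀ t u, t ≠ u → ¬ S t <+: S u

variable (lam : Cardinal.{0}) (C : Set (ℕ → Lam)) (κ : ℕ → Cardinal.{0})

lemma base (hC : Order.succ lam ≤ #C) : GoodFam lam C κ 0 (fun _ => ([] : List Lam)) := by
  constructor
  · intro t
    refine ⟨?_, Nat.zero_le _⟩
    rw [Big, Csets_nil]
    exact hC
  · intro t u hne
    exact absurd (funext fun i => i.elim0) hne

lemma stepEx (hsl : lam.IsStrongLimit) (hLam : #Lam = lam) (hκlt : ∀ n, κ n < lam)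
    (n : ℕ) (S : Tup κ n → List Lam) (hS : GoodFam lam C κ n S) :
    ∃ S' : Tup κ (n+1) → List Lam,
      GoodFam lam C κ (n+1) S' ∧ ∀ u : Tup κ (n+1), S (Fin.init u) <+: S' u := by
  choose f hf1 hf2 using fun t : Tup κ n =>
    split lam hsl hLam C (S t) ((hS.1 t).1) (κ := κ n) (hκlt n)
  refine ⟨fun u => f (Fin.init u) (u (Fin.last n)), ⟨?_, ?_⟩, ?_⟩
  · intro u
    obtain ⟨hp, hl, hb⟩ := hf1 (Fin.init u) (u (Fin.last n))
    refine ⟨hb, ?_⟩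
    have h2 := (hS.1 (Fin.init u)).2
    show n + 1 ≤ (f (Fin.init u) (u (Fin.last n))).length
    omega
  · intro u v huv hpre
    have hpre' : f (Fin.init u) (u (Fin.last n)) <+: f (Fin.init v) (v (Fin.last n)) := hpre
    clear hpre
    by_cases h : Fin.init u = Fin.init v
    · have hlast : u (Fin.last n) ≠ v (Fin.last n) := by
        intro heq
        apply huv
        funext i
        refine Fin.lastCases ?_ ?_ i
        · exact heq
        · intro j; exact congrFun h j
      rw [← h] at hpre'
      exact hf2 (Fin.init u) _ _ hlast hpre' 
    · have h1 : S (Fin.init u) <+: f (Fin.init u) (u (Fin.last n)) :=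
        (hf1 (Fin.init u) (u (Fin.last n))).1
      have h2 : S (Fin.init v) <+: f (Fin.init v) (v (Fin.last n)) :=
        (hf1 (Fin.init v) (v (Fin.last n))).1
      have h3 := h1.trans hpre' 
      rcases prefix_comparable h3 h2 with h4 | h4
      · exact hS.2 _ _ h h4
      · exact hS.2 _ _ (Ne.symm h) h4
  · intro u
    exact (hf1 (Fin.init u) (u (Fin.last n))).1

noncomputable def stepFun (hsl : lam.IsStrongLimit) (hLam : #Lam = lam)
    (hκlt : ∀ n, κ n < lam)
    (n : ℕ) (q : {S : Tup κ n → List Lam // GoodFam lam C κ n S}) :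
    {q' : {S' : Tup κ (n+1) → List Lam // GoodFam lam C κ (n+1) S'} //
      ∀ u : Tup κ (n+1), q.1 (Fin.init u) <+: q'.1 u} :=
  have h := stepEx lam C κ hsl hLam hκlt n q.1 q.2
  ⟨⟨Classical.choose h, (Classical.choose_spec h).1⟩, (Classical.choose_spec h).2⟩

noncomputable def chain (hsl : lam.IsStrongLimit) (hLam : #Lam = lam)
    (hκlt : ∀ n, κ n < lam) (hC : Order.succ lam ≤ #C) :
    ∀ n : ℕ, {S : Tup κ n → List Lam // GoodFam lam C κ n S} :=
  fun n => Nat.rec ⟨fun _ => ([] : List Lam), base lam C κ hC⟩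
    (fun m q => (stepFun lam C κ hsl hLam hκlt m q).1) n

lemma chain_link (hsl : lam.IsStrongLimit) (hLam : #Lam = lam)
    (hκlt : ∀ n, κ n < lam) (hC : Order.succ lam ≤ #C) (n : ℕ) (u : Tup κ (n+1)) :
    (chain lam C κ hsl hLam hκlt hC n).1 (Fin.init u) <+:
      (chain lam C κ hsl hLam hκlt hC (n+1)).1 u :=
  (stepFun lam C κ hsl hLam hκlt n (chain lam C κ hsl hLam hκlt hC n)).2 u

lemma mem_closure_of_agree {X : Type} [TopologicalSpace X] (D : Set (ℕ → X)) (x : ℕ → X)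
    (h : ∀ m : ℕ, ∃ y ∈ D, ∀ i < m, y i = x i) : x ∈ closure D := by
  rw [mem_closure_iff]
  intro U hU hxU
  obtain ⟨I, u, hu, hsub⟩ := isOpen_pi_iff.1 hU x hxU
  obtain ⟨y, hyD, hy⟩ := h ((I.sup id) + 1)
  refine ⟨y, hsub ?_, hyD⟩
  intro i hi
  rw [hy i (by have := Finset.le_sup (f := id) hi; simp only [id] at this; omega)]
  exact (hu i hi).2

theorem keyConstruction (lam : Cardinal.{0}) (hsl : lam.IsStrongLimit)
    {Lam : Type} [TopologicalSpace Lam] (hLam : #Lam = lam)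
    (C : Set (ℕ → Lam)) (hC : Order.succ lam ≤ #C)
    (κ : ℕ → Cardinal.{0}) (hκlt : ∀ n, κ n < lam) (hκ1 : ∀ n, 1 ≤ κ n) :
    ∃ D ⊆ C, #D ≤ lam ∧ (∀ n, κ n ≤ #D) ∧
      Cardinal.prod κ ≤ #(closure D) ∧ #(closure D) ≤ lam ^ ℵ₀ := by
  classical
  have hlaminf : ℵ₀ ≤ lam := hsl.aleph0_le
  haveI : Infinite Lam := Cardinal.infinite_iff.mpr (by rw [hLam]; exact hlaminf)
  haveI hKne : ∀ n, Nonempty (K κ n) := fun n =>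
    mk_ne_zero_iff.1 (by rw [mk_out]; exact Cardinal.one_le_iff_ne_zero.1 (hκ1 n))
  set S : ∀ n, Tup κ n → List Lam := fun n => (chain lam C κ hsl hLam hκlt hC n).1 with hSdef
  have hGood : ∀ n, GoodFam lam C κ n (S n) := fun n => (chain lam C κ hsl hLam hκlt hC n).2
  have hlink : ∀ n (u : Tup κ (n+1)), S n (Fin.init u) <+: S (n+1) u :=
    chain_link lam C κ hsl hLam hκlt hC
  -- coherence across levels
  have cohle : ∀ n m (h : n ≤ m) (u : Tup κ m),
      S n (fun i : Fin n => u (Fin.castLE h i)) <+: S m u := by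
    intro n
    refine Nat.le_induction ?_ ?_
    · intro u
      have he : (fun i : Fin n => u (Fin.castLE le_rfl i)) = u := rfl
      rw [he]
    · intro m h' IH u
      have h1 := hlink m u
      have h2 := IH (Fin.init u)
      have h3 : (fun i : Fin n => (Fin.init u) (Fin.castLE h' i)) =
          (fun i : Fin n => u (Fin.castLE (h'.trans (Nat.le_succ m)) i)) := rfl
      rw [h3] at h2
      exact h2.trans h1
  -- choose witnesses
  have hnonempty : ∀ n (t : Tup κ n), (Csets C (S n t)).Nonempty := by
    intro n t
    have hbig := ((hGood n).1 t).1
    rw [Big] at hbig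
    have hpos : (0 : Cardinal) < #(Csets C (S n t)) :=
      lt_of_lt_of_le (lt_of_le_of_lt (zero_le (a := lam)) (Order.lt_succ lam)) hbig
    rw [← Set.nonempty_coe_sort]
    exact mk_ne_zero_iff.1 hpos.ne'
  choose d hd using hnonempty
  set D : Set (ℕ → Lam) := ⋃ n : ℕ, Set.range (fun t : Tup κ n => d n t) with hDdef
  have hDC : D ⊆ C := by
    rintro x hx
    obtain ⟨n, t, rfl⟩ := by simpa [hDdef] using hx
    exact (hd n t).1
  have hdD : ∀ n (t : Tup κ n), d n t ∈ D := fun n t =>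
    Set.mem_iUnion.2 ⟨n, Set.mem_range_self _⟩
  have hdinj : ∀ n (t u : Tup κ n), d n t = d n u → t = u := by
    intro n t u h
    by_contra hne'
    have h1 : d n t ∈ Csets C (S n t) := hd n t
    have h2 : d n t ∈ Csets C (S n u) := h ▸ hd n u
    rcases comparable_of_mem h1 h2 with hc | hc
    · exact (hGood n).2 t u hne' hc
    · exact (hGood n).2 u t (Ne.symm hne') hc
  have hSinj : ∀ n, Function.Injective (S n) := by
    intro n t u h
    by_contra hne'
    exact (hGood n).2 t u hne' (h ▸ List.prefix_refl _)
  have hTup : ∀ n, #(Tup κ n) ≤ lam := by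
    intro n
    calc #(Tup κ n) ≤ #(List Lam) := mk_le_of_injective (hSinj n)
      _ = #Lam := mk_list_eq_mk Lam
      _ = lam := hLam
  have hDlam : #D ≤ lam := by
    calc #D ≤ #ℕ * ⨆ n : ℕ, #(Set.range (fun t : Tup κ n => d n t)) := mk_iUnion_le _
      _ ≤ ℵ₀ * lam := by
          refine mul_le_mul' (le_of_eq mk_nat) (ciSup_le fun n => le_trans mk_range_le (hTup n))
      _ = lam := aleph0_mul_eq hlaminf
  have hDge : ∀ m, κ m ≤ #D := by
    intro m
    have t0 : Tup κ m := fun i => Classical.arbitrary _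
    have hinj : Function.Injective (fun a : K κ m =>
        (⟨d (m+1) (Fin.snoc t0 a), hdD (m+1) (Fin.snoc t0 a)⟩ : D)) := by
      intro a b h
      have h1 : d (m+1) (Fin.snoc t0 a) = d (m+1) (Fin.snoc t0 b) := congrArg Subtype.val h
      have h2 := hdinj (m+1) _ _ h1
      have h3 := congrFun h2 (Fin.last m)
      simpa using h3
    calc κ m = #(K κ m) := (mk_out (κ m)).symm
      _ ≤ #D := mk_le_of_injective hinj
  -- branches
  set tup : (∀ n, K κ n) → ∀ n, Tup κ n := fun β n i => β i.val with htupdef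
  set sN : (∀ n, K κ n) → ℕ → List Lam := fun β n => S n (tup β n) with hsNdef
  have hchain : ∀ β {n m : ℕ}, n ≤ m → sN β n <+: sN β m := by
    intro β n m h
    exact cohle n m h (tup β m)
  have hlen : ∀ β n, n ≤ (sN β n).length := fun β n => ((hGood n).1 _).2
  set xB : (∀ n, K κ n) → ℕ → Lam := fun β i =>
    (sN β (i+1))[i]'(lt_of_lt_of_le i.lt_succ_self (hlen β (i+1))) with hxBdef
  have hagree : ∀ β n i (h : i < (sN β n).length), xB β i = (sN β n)[i] := by
    intro β n i h
    have p1 : sN β (i+1) <+: sN β (max n (i+1)) := hchain β (le_max_right _ _)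
    have p2 : sN β n <+: sN β (max n (i+1)) := hchain β (le_max_left _ _)
    have e1 := p1.getElem (lt_of_lt_of_le i.lt_succ_self (hlen β (i+1)))
    have e2 := p2.getElem h
    show (sN β (i+1))[i]'(lt_of_lt_of_le i.lt_succ_self (hlen β (i+1))) = (sN β n)[i]
    rw [e1, e2]
  have hdagree : ∀ β m i, i < m → d m (tup β m) i = xB β i := by
    intro β m i him
    have hmem := hd m (tup β m)
    have hL : i < (sN β m).length := lt_of_lt_of_le him (hlen β m)
    have h1 : (trc (d m (tup β m)) (sN β m).length)[i]'(by rw [trc_length]; exact hL) =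
        d m (tup β m) i := trc_getElem _ _ _ _
    have h2 := List.getElem_of_eq hmem.2 (show i < (trc (d m (tup β m)) ((S m (tup β m)).length)).length by rw [trc_length]; exact hL)
    rw [trc_getElem] at h2
    rw [h2, hagree β m i hL]
  have hxcl : ∀ β, xB β ∈ closure D := by
    intro β
    refine mem_closure_of_agree D (xB β) (fun m => ⟨d m (tup β m), hdD m (tup β m), ?_⟩)
    intro i hi
    exact hdagree β m i hi
  have hnode : ∀ β n, sN β n = trc (xB β) (sN β n).length := by
    intro β n
    refine List.ext_getElem (by rw [trc_length]) ?_
    intro i h1 h2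
    rw [trc_getElem, hagree β n i h1]
  have hxBinj : Function.Injective xB := by
    intro β γ h
    funext n
    by_contra hab
    have htup : tup β (n+1) ≠ tup γ (n+1) := by
      intro hteq
      exact hab (congrFun hteq (⟨n, n.lt_succ_self⟩ : Fin (n+1)))
    have hA := hnode β (n+1)
    have hB := hnode γ (n+1)
    rw [← h] at hB
    have c1 : sN β (n+1) <+: trc (xB β) (max (sN β (n+1)).length (sN γ (n+1)).length) := by
      conv_lhs => rw [hA]
      exact trc_prefix _ (le_max_left _ _)
    have c2 : sN γ (n+1) <+: trc (xB β) (max (sN β (n+1)).length (sN γ (n+1)).length) := by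
      conv_lhs => rw [hB]
      exact trc_prefix _ (le_max_right _ _)
    rcases prefix_comparable c1 c2 with hc | hc
    · exact (hGood (n+1)).2 _ _ htup hc
    · exact (hGood (n+1)).2 _ _ (Ne.symm htup) hc
  have hclosure_ge : Cardinal.prod κ ≤ #(closure D) := by
    have h1 : Cardinal.prod κ = #(∀ n, K κ n) := by
      rw [mk_pi]
      congr 1
      funext n
      rw [mk_out]
    rw [h1]
    refine mk_le_of_injective (f := fun β => (⟨xB β, hxcl β⟩ : closure D)) ?_
    intro β γ h
    exact hxBinj (congrArg Subtype.val h)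
  have hclosure_le : #(closure D) ≤ lam ^ ℵ₀ := by
    have : #(ℕ → Lam) = lam ^ ℵ₀ := by rw [← hLam, ← mk_nat, power_def]
    rw [← this]
    exact mk_set_le _
  exact ⟨D, hDC, hDlam, hDge, hclosure_ge, hclosure_le⟩


end Construction
end Stmt16

open Cardinal

theorem stmt_16 (lam : Cardinal.{0}) (hsl : lam.IsStrongLimit)
    (hcf : lam.ord.cof = Cardinal.aleph0)
    (Lam : Type) [TopologicalSpace Lam] [DiscreteTopology Lam] (hLam : #Lam = lam)
    (C : Set (ℕ → Lam)) (hC : #↥C = Order.succ lam) :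
    ∃ D ⊆ C, #↥D = lam ∧ #↥(closure D) = lam ^ Cardinal.aleph0 := by
  classical
  have hlaminf : ℵ₀ ≤ lam := hsl.aleph0_le
  have hCge : Order.succ lam ≤ #C := hC.ge
  rcases eq_or_lt_of_le hlaminf with heq | hlt
  · -- lam = ℵ₀
    set κ : ℕ → Cardinal.{0} := fun n => ((n + 2 : ℕ) : Cardinal) with hκdef
    have hκlt : ∀ n, κ n < lam := fun n => by
      rw [← heq]; exact nat_lt_aleph0 (n + 2)
    have hκ1 : ∀ n, 1 ≤ κ n := fun n => by
      show (1 : Cardinal) ≤ ((n + 2 : ℕ) : Cardinal)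
      exact_mod_cast Nat.succ_le_succ (Nat.zero_le (n + 1))
    obtain ⟨D, hDC, hDle, hDge, hclge, hclle⟩ :=
      Stmt16.keyConstruction lam hsl hLam C hCge κ hκlt hκ1
    refine ⟨D, hDC, le_antisymm hDle ?_, ?_⟩
    · rw [← heq, Cardinal.aleph0_le]
      intro n
      calc (n : Cardinal) ≤ ((n + 2 : ℕ) : Cardinal) := by exact_mod_cast Nat.le_add_right n 2
        _ ≤ #D := hDge n
    · have h2 : lam ^ ℵ₀ = 2 ^ ℵ₀ := by rw [← heq]; exact power_self_eq le_rfl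
      have hge : 2 ^ ℵ₀ ≤ Cardinal.prod κ := by
        have h3 : Cardinal.prod (fun _ : ℕ => (2 : Cardinal)) = 2 ^ ℵ₀ := by
          rw [prod_const', mk_nat]
        rw [← h3]
        refine prod_le_prod _ _ fun n => ?_
        show (2 : Cardinal) ≤ ((n + 2 : ℕ) : Cardinal)
        exact_mod_cast Nat.le_add_left 2 n
      exact le_antisymm hclle (h2 ▸ (hge.trans hclge))
  · -- ℵ₀ < lam
    obtain ⟨ι, f, hflsub, hfι⟩ := Ordinal.exists_lsub_cof lam.ord
    rw [hcf] at hfι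
    obtain ⟨e⟩ : Nonempty (ℕ ≃ ι) := Cardinal.eq.1 (by rw [hfι, mk_nat])
    set μ : ℕ → Cardinal := fun n => (f (e n)).card with hμdef
    have hμlt : ∀ n, μ n < lam := by
      intro n
      rw [← Cardinal.lt_ord, ← hflsub]
      exact Ordinal.lt_lsub f (e n)
    have hμcof : ∀ c, c < lam → ∃ n, c ≤ μ n := by
      intro c hc
      have h1 : c.ord < Ordinal.lsub f := by rw [hflsub]; exact Cardinal.ord_lt_ord.2 hc
      obtain ⟨i, hi⟩ := Ordinal.lt_lsub_iff.1 h1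
      refine ⟨e.symm i, ?_⟩
      have h2 := Ordinal.card_le_card hi
      rw [Cardinal.card_ord] at h2
      simpa [hμdef, e.apply_symm_apply] using h2
    set κ : ℕ → Cardinal.{0} :=
      fun n => Nat.rec (max ℵ₀ (μ 0)) (fun m p => max (μ (m + 1)) (2 ^ p)) n with hκdef
    have hκ0 : κ 0 = max ℵ₀ (μ 0) := rfl
    have hκs : ∀ n, κ (n + 1) = max (μ (n + 1)) (2 ^ κ n) := fun n => rfl
    have hκlt : ∀ n, κ n < lam := by
      intro n
      induction n with
      | zero => rw [hκ0]; exact max_lt hlt (hμlt 0)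
      | succ m ih => rw [hκs]; exact max_lt (hμlt (m + 1)) (hsl.two_power_lt ih)
    have hκinf : ∀ n, ℵ₀ ≤ κ n := by
      intro n
      induction n with
      | zero => rw [hκ0]; exact le_max_left _ _
      | succ m ih => rw [hκs]; exact le_trans (ih.trans (cantor (κ m)).le) (le_max_right _ _)
    have hκ1 : ∀ n, 1 ≤ κ n := fun n => one_lt_aleph0.le.trans (hκinf n)
    have hκμ : ∀ n, μ n ≤ κ n := by
      intro n
      cases n with
      | zero => rw [hκ0]; exact le_max_right _ _
      | succ m => rw [hκs]; exact le_max_left _ _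
    have hκ2 : ∀ n, 2 ^ κ n ≤ κ (n + 1) := fun n => by rw [hκs]; exact le_max_right _ _
    have hκsup : lam ≤ ⨆ n, κ n := by
      by_contra hns
      push_neg at hns
      have h2 := hsl.two_power_lt hns
      obtain ⟨n, hn⟩ := hμcof _ h2
      have h3 := le_ciSup (Cardinal.bddAbove_range κ) n
      exact absurd ((hn.trans (hκμ n)).trans h3) (not_le.2 (cantor _))
    have hsup_le : (⨆ n, κ n) ≤ lam := ciSup_le fun n => (hκlt n).le
    have hsum : sum κ = lam := by
      refine le_antisymm ?_ ?_
      · refine le_trans (sum_le_mk_mul_iSup κ) ?_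
        rw [mk_nat]
        calc ℵ₀ * ⨆ n, κ n ≤ ℵ₀ * lam := mul_le_mul' le_rfl hsup_le
          _ = lam := aleph0_mul_eq hlaminf
      · exact hκsup.trans (ciSup_le fun n => le_sum κ n)
    have hshift : Cardinal.prod (fun n => κ (n + 1)) ≤ Cardinal.prod κ := by
      have h1 : Cardinal.prod (fun n => κ (n + 1)) = #(∀ n : ℕ, (κ (n + 1)).out) := by
        rw [mk_pi]; congr 1; funext n; rw [mk_out]
      have h2 : Cardinal.prod κ = #(∀ n : ℕ, (κ n).out) := by
        rw [mk_pi]; congr 1; funext n; rw [mk_out]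
      rw [h1, h2]
      obtain ⟨pt⟩ : Nonempty ((κ 0).out) :=
        mk_ne_zero_iff.1 (by rw [mk_out]; exact Cardinal.one_le_iff_ne_zero.1 (hκ1 0))
      refine mk_le_of_injective
        (f := fun (x : ∀ n : ℕ, (κ (n + 1)).out) (n : ℕ) =>
          Nat.casesOn (motive := fun n => (κ n).out) n pt (fun m => x m)) ?_
      intro x y h
      funext m
      exact congrFun h (m + 1)
    have hprodge : lam ^ ℵ₀ ≤ Cardinal.prod κ := by
      calc lam ^ ℵ₀ ≤ lam ^ lam := power_le_power_left hsl.ne_zero hlaminf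
        _ = 2 ^ lam := power_self_eq hlaminf
        _ = 2 ^ sum κ := by rw [hsum]
        _ = Cardinal.prod (fun n => 2 ^ κ n) := power_sum 2 κ
        _ ≤ Cardinal.prod (fun n => κ (n + 1)) := prod_le_prod _ _ hκ2
        _ ≤ Cardinal.prod κ := hshift
    obtain ⟨D, hDC, hDle, hDge, hclge, hclle⟩ :=
      Stmt16.keyConstruction lam hsl hLam C hCge κ hκlt hκ1
    refine ⟨D, hDC, le_antisymm hDle ?_, le_antisymm hclle (hprodge.trans hclge)⟩
    exact hκsup.trans (ciSup_le fun n => hDge n)
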